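/- Fix a real number v > 0. Then, as P → ∞, the integral ∫₀² [log((P+v)/(v + P t/2)) + P(t − 2)/(2(P+v))] · (1/2) e^{−t/2} dt converges to ∫₀² (log(2/t) + t/2 − 1) · (1/2) e^{−t/2} dt. -/

import Mathlib

open Filter MeasureTheory

/-- `-log t ≤ 2 t^{-1/2}` for `t > 0`. -/
lemma neg_log_le_aux (t : ℝ) (ht : 0 < t) : -Real.log t ≤ 2 * t ^ (-(1/2) : ℝ) := by
  have hs : 0 < Real.sqrt t := Real.sqrt_pos.mpr ht
  have h1 : Real.log (Real.sqrt t)⁻¹ ≤ (Real.sqrt t)⁻¹ - 1 :=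
    Real.log_le_sub_one_of_pos (inv_pos.mpr hs)
  have h2 : -Real.log t = 2 * Real.log (Real.sqrt t)⁻¹ := by
    rw [Real.log_inv, Real.log_sqrt ht.le]; ring
  have h3 : t ^ (-(1/2) : ℝ) = (Real.sqrt t)⁻¹ := by
    rw [Real.rpow_neg ht.le, ← Real.sqrt_eq_rpow]
  rw [h2, h3]
  nlinarith [h1]

/-- As the signal power `P → ∞`, the GMI of element-wise GNNDR on the block noncoherent AWGN
channel with noise variance `v > 0`,
`∫₀² (log ((P+v)/(v + P t/2)) + P(t-2)/(2(P+v))) · (1/2) e^{-t/2} dt`, converges to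
`∫₀² (log (2/t) + t/2 - 1) · (1/2) e^{-t/2} dt`. -/
theorem elementwise_gmi_tendsto (v : ℝ) (hv : 0 < v) :
    Tendsto (fun P : ℝ =>
        ∫ t in (0:ℝ)..2,
          (Real.log ((P + v) / (v + P * t / 2)) + P * (t - 2) / (2 * (P + v))) *
            ((1 / 2) * Real.exp (-t / 2)))
      atTop
      (nhds (∫ t in (0:ℝ)..2,
        (Real.log (2 / t) + t / 2 - 1) * ((1 / 2) * Real.exp (-t / 2)))) := by
  have h02 : (0:ℝ) ≤ 2 := by norm_num
  simp only [intervalIntegral.integral_of_le h02]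
  set C : ℝ := Real.log (2 * (1 + v)) with hC
  have hC0 : 0 ≤ C := Real.log_nonneg (by nlinarith)
  apply MeasureTheory.tendsto_integral_filter_of_dominated_convergence
    (bound := fun t => (C + 2 * t ^ (-(1/2) : ℝ) + 1) * (1/2))
  · -- measurability
    refine Filter.Eventually.of_forall fun P => ?_
    apply Measurable.aestronglyMeasurable
    exact ((Real.measurable_log.comp (by fun_prop)).add (by fun_prop)).mul (by fun_prop)
  · -- bound
    filter_upwards [eventually_ge_atTop (1:ℝ)] with P hP
    rw [ae_restrict_iff' measurableSet_Ioc]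
    refine Filter.Eventually.of_forall fun t ht => ?_
    obtain ⟨ht0, ht2⟩ := ht
    have hP0 : (0:ℝ) < P := by linarith
    have hpt : 0 < P * t / 2 := by positivity
    have hden : 0 < v + P * t / 2 := by linarith
    have hnum : 0 < P + v := by linarith
    -- the log term is nonnegative
    have hle : v + P * t / 2 ≤ P + v := by nlinarith
    have hA0 : 0 ≤ Real.log ((P + v) / (v + P * t / 2)) :=
      Real.log_nonneg ((one_le_div hden).mpr hle)
    -- upper bound for the log term
    have hA_up : Real.log ((P + v) / (v + P * t / 2)) ≤ C - Real.log t := by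
      have s1 : (P + v) / (v + P * t / 2) ≤ (P + v) / (P * t / 2) := by
        apply div_le_div_of_nonneg_left hnum.le hpt
        linarith
      have s2 : (P + v) / (P * t / 2) ≤ 2 * (1 + v) / t := by
        rw [div_le_div_iff₀ hpt ht0]
        nlinarith [mul_nonneg (mul_nonneg ht0.le hv.le) (by linarith : (0:ℝ) ≤ P - 1)]
      have s3 : Real.log ((P + v) / (v + P * t / 2)) ≤ Real.log (2 * (1 + v) / t) :=
        Real.log_le_log (div_pos hnum hden) (le_trans s1 s2)
      have s4 : Real.log (2 * (1 + v) / t) = C - Real.log t :=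
        Real.log_div (by positivity) ht0.ne'
      linarith
    have hA_bd : |Real.log ((P + v) / (v + P * t / 2))| ≤ C + 2 * t ^ (-(1/2) : ℝ) := by
      rw [abs_of_nonneg hA0]
      have := neg_log_le_aux t ht0
      linarith
    -- bound for the linear term
    have hB_bd : |P * (t - 2) / (2 * (P + v))| ≤ 1 := by
      rw [abs_div, abs_of_pos (by linarith : (0:ℝ) < 2 * (P + v)), div_le_one (by linarith)]
      rw [abs_mul, abs_of_pos hP0, abs_of_nonpos (by linarith : t - 2 ≤ 0)]
      nlinarith [mul_pos hP0 ht0]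
    -- bound for the weight
    have hg0 : 0 ≤ (1/2 : ℝ) * Real.exp (-t / 2) := by positivity
    have hg1 : (1/2 : ℝ) * Real.exp (-t / 2) ≤ 1/2 := by
      have : Real.exp (-t / 2) ≤ 1 := Real.exp_le_one_iff.mpr (by linarith)
      linarith
    rw [Real.norm_eq_abs, abs_mul, abs_of_nonneg hg0]
    have habs : |Real.log ((P + v) / (v + P * t / 2)) + P * (t - 2) / (2 * (P + v))|
        ≤ C + 2 * t ^ (-(1/2) : ℝ) + 1 := by
      calc |Real.log ((P + v) / (v + P * t / 2)) + P * (t - 2) / (2 * (P + v))|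
          ≤ |Real.log ((P + v) / (v + P * t / 2))| + |P * (t - 2) / (2 * (P + v))| :=
            abs_add_le _ _
        _ ≤ C + 2 * t ^ (-(1/2) : ℝ) + 1 := by linarith
    exact mul_le_mul habs hg1 hg0 (by positivity)
  · -- integrability of the bound
    have h1 : IntervalIntegrable (fun t : ℝ => t ^ (-(1/2) : ℝ)) volume 0 2 :=
      intervalIntegral.intervalIntegrable_rpow' (by norm_num)
    have h1' : IntegrableOn (fun t : ℝ => t ^ (-(1/2) : ℝ)) (Set.Ioc 0 2) volume :=
      (intervalIntegrable_iff_integrableOn_Ioc_of_le h02).mp h1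
    have hfin : (volume : Measure ℝ) (Set.Ioc 0 2) < ⊤ := by
      rw [Real.volume_Ioc]; exact ENNReal.ofReal_lt_top
    have hc1 : IntegrableOn (fun _ : ℝ => C) (Set.Ioc 0 2) volume :=
      integrableOn_const hfin.ne
    have hc2 : IntegrableOn (fun _ : ℝ => (1:ℝ)) (Set.Ioc 0 2) volume :=
      integrableOn_const hfin.ne
    exact (((hc1.add (h1'.const_mul 2)).add hc2).mul_const (1/2))
  · -- a.e. pointwise convergence
    rw [ae_restrict_iff' measurableSet_Ioc]
    refine Filter.Eventually.of_forall fun t ht => ?_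
    obtain ⟨ht0, ht2⟩ := ht
    have hinv : Tendsto (fun P : ℝ => v / P) atTop (nhds 0) :=
      Tendsto.div_atTop tendsto_const_nhds tendsto_id
    -- the log argument tends to 2/t
    have T1 : Tendsto (fun P : ℝ => (P + v) / (v + P * t / 2)) atTop (nhds (2 / t)) := by
      have heq : ∀ᶠ P in atTop, (1 + v / P) / (v / P + t / 2) = (P + v) / (v + P * t / 2) := by
        filter_upwards [eventually_gt_atTop (0:ℝ)] with P hP
        have hden : (0:ℝ) < v + P * t / 2 := by positivity
        have hden2 : (0:ℝ) < v / P + t / 2 := by positivity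
        rw [div_eq_div_iff hden2.ne' hden.ne']
        field_simp
      have Tg : Tendsto (fun P : ℝ => (1 + v / P) / (v / P + t / 2)) atTop
          (nhds ((1 + 0) / (0 + t / 2))) := by
        exact Tendsto.div (tendsto_const_nhds.add hinv) (hinv.add tendsto_const_nhds)
          (by positivity)
      have hval : (1 + 0 : ℝ) / (0 + t / 2) = 2 / t := by
        rw [add_zero, zero_add, one_div_div]
      rw [hval] at Tg
      exact Tg.congr' heq
    have T1log : Tendsto (fun P : ℝ => Real.log ((P + v) / (v + P * t / 2))) atTop
        (nhds (Real.log (2 / t))) :=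
      ((Real.continuousAt_log (by positivity)).tendsto.comp T1)
    -- the linear term tends to (t-2)/2
    have T2 : Tendsto (fun P : ℝ => P * (t - 2) / (2 * (P + v))) atTop
        (nhds ((t - 2) / 2)) := by
      have heq : ∀ᶠ P in atTop, (t - 2) / (2 * (1 + v / P)) = P * (t - 2) / (2 * (P + v)) := by
        filter_upwards [eventually_gt_atTop (0:ℝ)] with P hP
        have h1 : (0:ℝ) < 2 * (1 + v / P) := by positivity
        have h2 : (0:ℝ) < 2 * (P + v) := by positivity
        rw [div_eq_div_iff h1.ne' h2.ne']
        field_simp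
      have Tg : Tendsto (fun P : ℝ => (t - 2) / (2 * (1 + v / P))) atTop
          (nhds ((t - 2) / (2 * (1 + 0)))) := by
        exact Tendsto.div tendsto_const_nhds
          (Tendsto.const_mul 2 (tendsto_const_nhds.add hinv)) (by norm_num)
      have hval : (t - 2) / (2 * (1 + 0 : ℝ)) = (t - 2) / 2 := by norm_num
      rw [hval] at Tg
      exact Tg.congr' heq
    have Tsum := (T1log.add T2).mul_const ((1/2 : ℝ) * Real.exp (-t / 2))
    have hval2 : (Real.log (2 / t) + (t - 2) / 2) * ((1/2 : ℝ) * Real.exp (-t / 2))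
        = (Real.log (2 / t) + t / 2 - 1) * ((1/2 : ℝ) * Real.exp (-t / 2)) := by ring
    rw [hval2] at Tsum
    exact Tsum
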